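/- Let 1 ≤ a ≤ n and u_1,...,u_n be variables. Define Q(z) = ∏_{|I|=a} (1 - z u_I). Then Q(z) · ∑_{k≥0} s_{k^a} z^k is a polynomial in z of degree (n choose a) - n, where s_{k^a} is the Schur polynomial of the a×k rectangular partition in u_1,...,u_n. -/

import Mathlib

noncomputable def alternant (n : ℕ) (μ : Fin n → ℕ) : MvPolynomial (Fin n) ℚ :=
  Matrix.det (Matrix.of fun i j => MvPolynomial.X i ^ μ j)

namespace RectGF

open Finset

lemma choose_ge (a : ℕ) : ∀ n, 1 ≤ a → a < n → n ≤ n.choose a := by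
  intro n
  induction n with
  | zero => omega
  | succ n ih =>
    intro h1 h2
    rcases Nat.lt_or_ge a n with h | h
    · have h3 := ih h1 h
      have h4 : 0 < n.choose (a - 1) := Nat.choose_pos (by omega)
      have hrec : (n + 1).choose a = n.choose (a - 1) + n.choose a := by
        obtain ⟨b, rfl⟩ : ∃ b, a = b + 1 := ⟨a - 1, by omega⟩
        simp [Nat.choose_succ_succ]
      omega
    · have ha : a = n := by omega
      subst ha
      rw [Nat.choose_succ_self_right]

variable (n a : ℕ)

abbrev R := MvPolynomial (Fin n) ℚ
abbrev K := FractionRing (R n)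

noncomputable def φ : R n →+* K n := algebraMap _ _

noncomputable def u (i : Fin n) : K n := φ n (MvPolynomial.X i)

lemma phi_injective : Function.Injective (φ n) := IsFractionRing.injective _ _

lemma u_injective : Function.Injective (u n) :=
  (phi_injective n).comp MvPolynomial.X_injective

lemma u_ne_zero (i : Fin n) : u n i ≠ 0 := by
  intro h
  exact MvPolynomial.X_ne_zero i (phi_injective n (by simpa [u] using h))

/-- The reversed Vandermonde matrix. -/
noncomputable def Vrev : Matrix (Fin n) (Fin n) (K n) :=
  Matrix.of fun i j => u n i ^ ((n : ℤ) - 1 - (j : ℕ))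

lemma det_Vrev_ne_zero : (Vrev n).det ≠ 0 := by
  have h1 : Vrev n = (Matrix.vandermonde (u n)).submatrix id Fin.revPerm := by
    ext i j
    simp only [Vrev, Matrix.of_apply, Matrix.submatrix_apply, Matrix.vandermonde, id_eq,
      Fin.revPerm_apply]
    rw [show ((n : ℤ) - 1 - (j : ℕ)) = ((Fin.rev j : ℕ) : ℤ) by
      rw [Fin.val_rev]; have := j.isLt; omega, zpow_natCast]
  rw [h1, Matrix.det_permute', Matrix.det_vandermonde]
  apply mul_ne_zero
  · rcases Int.units_eq_one_or (Equiv.Perm.sign (Fin.revPerm : Equiv.Perm (Fin n))) with h | h <;>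
      simp [h]
  · rw [Finset.prod_ne_zero_iff]
    intro i _
    rw [Finset.prod_ne_zero_iff]
    intro j hj
    rw [Finset.mem_Ioi] at hj
    exact sub_ne_zero.mpr fun hc => (Fin.ne_of_lt hj).symm (u_injective n hc)

/-- Integer exponents of the shifted rectangular alternant. -/
def e (t : ℤ) (j : Fin n) : ℤ := (if (j : ℕ) < a then t else 0) + ((n : ℤ) - 1 - (j : ℕ))

noncomputable def A (t : ℤ) : K n :=
  (Matrix.of fun i j => u n i ^ e n a t j).det

lemma A_zero : A n a 0 = (Vrev n).det := by
  unfold A Vrev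
  congr 1
  ext i j
  simp [e]

lemma phi_alternant (μ : Fin n → ℕ) :
    φ n (alternant n μ) = (Matrix.of fun i j => u n i ^ ((μ j : ℕ) : ℤ)).det := by
  rw [alternant, RingHom.map_det]
  congr 1
  ext i j
  simp [RingHom.mapMatrix_apply, u, zpow_natCast]

lemma A_nat (k : ℕ) :
    A n a (k : ℤ) =
      φ n (alternant n fun j => (if (j : ℕ) < a then k else 0) + (n - 1 - (j : ℕ))) := by
  rw [phi_alternant]
  unfold A
  congr 1
  ext i j
  have hj := j.isLt
  have he : (((if (j : ℕ) < a then k else 0) + (n - 1 - (j : ℕ)) : ℕ) : ℤ) = e n a (k : ℤ) j := by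
    unfold e; split_ifs <;> omega
  simp only [Matrix.of_apply]
  rw [← he]

noncomputable def p0K : Polynomial (K n) :=
  ∏ I ∈ (univ : Finset (Fin n)).powersetCard a,
    (1 - Polynomial.C (∏ i ∈ I, u n i) * Polynomial.X)

lemma uI_ne_zero (I : Finset (Fin n)) : (∏ i ∈ I, u n i) ≠ 0 :=
  Finset.prod_ne_zero_iff.mpr fun i _ => u_ne_zero n i

lemma factor_natDegree (c : K n) (hc : c ≠ 0) :
    (1 - Polynomial.C c * Polynomial.X).natDegree = 1 := by
  rw [Polynomial.natDegree_sub_eq_right_of_natDegree_lt] <;>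
    rw [Polynomial.natDegree_C_mul_X c hc] <;> simp

lemma factor_ne_zero (c : K n) (hc : c ≠ 0) :
    (1 - Polynomial.C c * Polynomial.X) ≠ 0 := by
  intro h
  have := factor_natDegree n c hc
  rw [h] at this
  simp at this

lemma p0K_natDegree : (p0K n a).natDegree = n.choose a := by
  rw [p0K, Polynomial.natDegree_prod]
  · rw [Finset.sum_congr rfl fun I _ => factor_natDegree n _ (uI_ne_zero n I)]
    simp [Finset.card_powersetCard]
  · exact fun I _ => factor_ne_zero n _ (uI_ne_zero n I)

lemma p0K_ne_zero : p0K n a ≠ 0 :=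
  Finset.prod_ne_zero_iff.mpr fun I _ => factor_ne_zero n _ (uI_ne_zero n I)

lemma p0K_coeff_top_ne_zero : (p0K n a).coeff (n.choose a) ≠ 0 := by
  rw [← p0K_natDegree n a, Polynomial.coeff_natDegree]
  exact Polynomial.leadingCoeff_ne_zero.mpr (p0K_ne_zero n a)

lemma card_filter_lt (han : a ≤ n) :
    (univ.filter (fun j : Fin n => (j : ℕ) < a)).card = a := by
  have : univ.filter (fun j : Fin n => (j : ℕ) < a) = univ.map (Fin.castLEEmb han) := by
    ext j
    rw [mem_filter, Finset.mem_map]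
    constructor
    · intro hj
      exact ⟨⟨(j : ℕ), hj.2⟩, mem_univ _, Fin.ext rfl⟩
    · rintro ⟨i, -, rfl⟩
      exact ⟨mem_univ _, by simpa [Fin.castLEEmb] using i.isLt⟩
  rw [this, card_map, card_univ, Fintype.card_fin]

lemma eval_inv_P (han : a ≤ n) (σ : Equiv.Perm (Fin n)) :
    (p0K n a).eval
      ((∏ j ∈ univ.filter (fun j : Fin n => (j : ℕ) < a), u n (σ j))⁻¹) = 0 := by
  classical
  set P : K n := ∏ j ∈ univ.filter (fun j : Fin n => (j : ℕ) < a), u n (σ j) with hPdef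
  have hPne : P ≠ 0 := Finset.prod_ne_zero_iff.mpr fun i _ => u_ne_zero n _
  set I₀ : Finset (Fin n) := (univ.filter (fun j : Fin n => (j : ℕ) < a)).image σ with hI0
  have hmem : I₀ ∈ (univ : Finset (Fin n)).powersetCard a := by
    rw [mem_powersetCard_univ, hI0, Finset.card_image_of_injective _ σ.injective,
      card_filter_lt n a han]
  rw [p0K, Polynomial.eval_prod]
  apply Finset.prod_eq_zero hmem
  have hprod : (∏ i ∈ I₀, u n i) = P := by
    rw [hI0, Finset.prod_image (fun x _ y _ h => σ.injective h)]
  simp [hprod, mul_inv_cancel₀ hPne]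

lemma master (han : a ≤ n) (m : ℤ) :
    ∑ j ∈ range (n.choose a + 1), (p0K n a).coeff j * A n a (m - j) = 0 := by
  classical
  set P : Equiv.Perm (Fin n) → K n :=
    fun σ => ∏ j ∈ univ.filter (fun j : Fin n => (j : ℕ) < a), u n (σ j) with hP
  set c : Equiv.Perm (Fin n) → K n :=
    fun σ => ∏ j : Fin n, u n (σ j) ^ ((n : ℤ) - 1 - (j : ℕ)) with hc
  set sg : Equiv.Perm (Fin n) → K n :=
    fun σ => ((Equiv.Perm.sign σ : ℤ) : K n) with hsg
  have hPne : ∀ σ, P σ ≠ 0 := fun σ => Finset.prod_ne_zero_iff.mpr fun i _ => u_ne_zero n _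
  have hA : ∀ t : ℤ, A n a t =
      ∑ σ : Equiv.Perm (Fin n), sg σ * (P σ ^ t * c σ) := by
    intro t
    rw [A, Matrix.det_apply']
    refine Finset.sum_congr rfl fun σ _ => ?_
    have hinner : (∏ j : Fin n, (Matrix.of fun i j => u n i ^ e n a t j) (σ j) j)
        = P σ ^ t * c σ := by
      calc ∏ j : Fin n, (Matrix.of fun i j => u n i ^ e n a t j) (σ j) j
          = ∏ j : Fin n,
              (u n (σ j) ^ (if (j : ℕ) < a then t else 0) * u n (σ j) ^ ((n : ℤ) - 1 - (j : ℕ))) := by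
            refine Finset.prod_congr rfl fun j _ => ?_
            rw [Matrix.of_apply, e, zpow_add₀ (u_ne_zero n (σ j))]
        _ = (∏ j : Fin n, u n (σ j) ^ (if (j : ℕ) < a then t else 0)) * c σ :=
            Finset.prod_mul_distrib
        _ = P σ ^ t * c σ := by
            congr 1
            calc ∏ j : Fin n, u n (σ j) ^ (if (j : ℕ) < a then t else 0)
                = ∏ j : Fin n, (if (j : ℕ) < a then u n (σ j) ^ t else 1) := by
                  refine Finset.prod_congr rfl fun j _ => ?_
                  split_ifs <;> simp
              _ = ∏ j ∈ univ.filter (fun j : Fin n => (j : ℕ) < a), u n (σ j) ^ t :=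
                  (Finset.prod_filter _ _).symm
              _ = P σ ^ t := Finset.prod_zpow _ _ _
    rw [hinner]
  calc ∑ j ∈ range (n.choose a + 1), (p0K n a).coeff j * A n a (m - j)
      = ∑ j ∈ range (n.choose a + 1), ∑ σ : Equiv.Perm (Fin n),
          sg σ * (P σ ^ m * c σ * ((p0K n a).coeff j * ((P σ)⁻¹) ^ j)) := by
        refine Finset.sum_congr rfl fun j hj => ?_
        rw [hA, Finset.mul_sum]
        refine Finset.sum_congr rfl fun σ _ => ?_
        have hz : P σ ^ (m - (j : ℤ)) = P σ ^ m * ((P σ)⁻¹) ^ j := by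
          rw [zpow_sub₀ (hPne σ), div_eq_mul_inv, ← inv_zpow, zpow_natCast]
        rw [hz]
        ring
    _ = ∑ σ : Equiv.Perm (Fin n), sg σ *
          (P σ ^ m * c σ * ∑ j ∈ range (n.choose a + 1), (p0K n a).coeff j * ((P σ)⁻¹) ^ j) := by
        rw [Finset.sum_comm]
        refine Finset.sum_congr rfl fun σ _ => ?_
        rw [Finset.mul_sum, Finset.mul_sum]
    _ = 0 := by
        refine Finset.sum_eq_zero fun σ _ => ?_
        rw [← Polynomial.eval_eq_sum_range' (by rw [p0K_natDegree]; omega) ((P σ)⁻¹),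
          eval_inv_P n a han σ, mul_zero, mul_zero]

lemma A_neg (ha : 1 ≤ a) (hn : a < n) (t : ℤ) (h1 : -(n : ℤ) < t) (h2 : t < 0) :
    A n a t = 0 := by
  have hrt : ((-t).toNat : ℤ) = -t := Int.toNat_of_nonneg (by omega)
  set r : ℕ := (-t).toNat with hr
  have hr1 : 1 ≤ r := by omega
  have hrn : r ≤ n - 1 := by omega
  set j1 : ℕ := min (a - 1) (n - 1 - r) with hj1
  have hj1n : j1 < n := by omega
  have hj2n : j1 + r < n := by omega
  have hj1a : j1 < a := by omega
  have hj2a : a ≤ j1 + r := by omega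
  apply Matrix.det_zero_of_column_eq (i := (⟨j1, hj1n⟩ : Fin n)) (j := (⟨j1 + r, hj2n⟩ : Fin n))
  · exact Fin.ne_of_val_ne (show j1 ≠ j1 + r by omega)
  · intro k
    simp only [Matrix.of_apply]
    congr 1
    unfold e
    rw [if_pos (by simpa using hj1a), if_neg (by simpa using not_lt.mpr hj2a)]
    show t + ((n : ℤ) - 1 - (j1 : ℕ)) = 0 + ((n : ℤ) - 1 - ((j1 + r : ℕ) : ℤ))
    omega

lemma A_neg_n (ha : 1 ≤ a) (han : a ≤ n) : A n a (-(n : ℤ)) ≠ 0 := by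
  classical
  have hn : 0 < n := lt_of_lt_of_le ha han
  haveI : NeZero n := ⟨hn.ne'⟩
  set cA : Fin n := ⟨(n - a) % n, Nat.mod_lt _ hn⟩ with hcA
  set π : Equiv.Perm (Fin n) := Equiv.addRight cA with hπ
  have hcAval : (cA : ℕ) = n - a := by
    simp only [hcA]
    exact Nat.mod_eq_of_lt (by omega)
  have hπval : ∀ j : Fin n, ((π j : Fin n) : ℕ) = (j + (n - a)) % n := by
    intro j
    simp only [hπ, Equiv.coe_addRight, Fin.val_add, hcAval]
  have key : (Matrix.of fun i j : Fin n => u n i ^ e n a (-(n : ℤ)) j)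
      = Matrix.diagonal (fun i : Fin n => u n i ^ (-(a : ℤ))) * ((Vrev n).submatrix id π) := by
    ext i j
    rw [Matrix.diagonal_mul]
    simp only [Matrix.of_apply, Matrix.submatrix_apply, id_eq, Vrev, Matrix.of_apply]
    rw [← zpow_add₀ (u_ne_zero n i)]
    congr 1
    have hπj : ((π j : Fin n) : ℕ) = if (j : ℕ) < a then (j : ℕ) + (n - a) else (j : ℕ) - a := by
      rw [hπval j]
      split_ifs with h
      · exact Nat.mod_eq_of_lt (by omega)
      · have h2 : (j : ℕ) + (n - a) = ((j : ℕ) - a) + n := by omega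
        rw [h2, Nat.add_mod_right, Nat.mod_eq_of_lt (by omega)]
    unfold e
    have hjn := j.isLt
    rw [hπj]
    split_ifs with h <;> omega
  unfold A
  rw [key, Matrix.det_mul, Matrix.det_diagonal, Matrix.det_permute']
  apply mul_ne_zero
  · exact Finset.prod_ne_zero_iff.mpr fun i _ => zpow_ne_zero _ (u_ne_zero n i)
  · apply mul_ne_zero
    · rcases Int.units_eq_one_or (Equiv.Perm.sign π) with h | h <;> simp [h]
    · exact det_Vrev_ne_zero n

noncomputable def p0 : Polynomial (R n) :=
  ∏ I ∈ (univ : Finset (Fin n)).powersetCard a,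
    (1 - Polynomial.C (∏ i ∈ I, MvPolynomial.X i) * Polynomial.X)

lemma p0_map : (p0 n a).map (φ n) = p0K n a := by
  rw [p0, p0K, Polynomial.map_prod]
  refine Finset.prod_congr rfl fun I _ => ?_
  rw [Polynomial.map_sub, Polynomial.map_one, Polynomial.map_mul, Polynomial.map_C,
    Polynomial.map_X, map_prod]
  rfl

lemma p0_coe : ((p0 n a : Polynomial (R n)) : PowerSeries (R n)) =
    ∏ I ∈ (univ : Finset (Fin n)).powersetCard a,
      (1 - PowerSeries.C (∏ i ∈ I, MvPolynomial.X i) * PowerSeries.X) := by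
  rw [p0, ← Polynomial.coeToPowerSeries.ringHom_apply, map_prod]
  refine Finset.prod_congr rfl fun I _ => ?_
  rw [map_sub, map_one, map_mul, Polynomial.coeToPowerSeries.ringHom_apply,
    Polynomial.coeToPowerSeries.ringHom_apply, Polynomial.coe_C, Polynomial.coe_X]

lemma key_sum (s : ℕ → R n)
    (hs : ∀ k : ℕ, s k * alternant n (fun j => n - 1 - (j : ℕ)) =
      alternant n (fun j => (if (j : ℕ) < a then k else 0) + (n - 1 - (j : ℕ)))) (m : ℕ) :
    φ n (alternant n (fun j => n - 1 - (j : ℕ))) *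
      φ n (PowerSeries.coeff m (((p0 n a : Polynomial (R n)) : PowerSeries (R n)) *
        PowerSeries.mk s)) =
    ∑ j ∈ range (m + 1), (p0K n a).coeff j * A n a ((m : ℤ) - j) := by
  rw [PowerSeries.coeff_mul, Finset.Nat.sum_antidiagonal_eq_sum_range_succ_mk]
  simp only [Polynomial.coeff_coe, PowerSeries.coeff_mk]
  rw [← map_mul, Finset.mul_sum, map_sum]
  refine Finset.sum_congr rfl fun j hj => ?_
  have hj' : j ≤ m := by simp only [mem_range] at hj; omega
  rw [show alternant n (fun j => n - 1 - (j : ℕ)) * ((p0 n a).coeff j * s (m - j))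
      = (p0 n a).coeff j * (s (m - j) * alternant n (fun j => n - 1 - (j : ℕ))) by ring,
    hs (m - j), map_mul]
  congr 1
  · rw [← Polynomial.coeff_map, p0_map]
  · rw [← A_nat]
    congr 1
    omega

lemma sum_vanish (ha : 1 ≤ a) (han : a ≤ n) (m : ℕ) (hm : n.choose a - n < m) :
    ∑ j ∈ range (m + 1), (p0K n a).coeff j * A n a ((m : ℤ) - j) = 0 := by
  rcases le_or_gt (n.choose a) m with h | h
  · rw [← Finset.sum_range_add_sum_Ico _ (Nat.add_le_add_right h 1)]
    rw [master n a han (m : ℤ)]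
    rw [zero_add]
    refine Finset.sum_eq_zero fun j hj => ?_
    rw [Finset.mem_Ico] at hj
    rw [Polynomial.coeff_eq_zero_of_natDegree_lt (by rw [p0K_natDegree]; omega), zero_mul]
  · have haa : a < n := by
      rcases lt_or_eq_of_le han with h' | h'
      · exact h'
      · exfalso
        subst h'
        rw [Nat.choose_self] at hm h
        omega
    have hNn : n ≤ n.choose a := choose_ge a n ha haa
    have hmaster := master n a han (m : ℤ)
    rw [← Finset.sum_range_add_sum_Ico _ (Nat.add_le_add_right h.le 1)] at hmaster
    have h0 : ∑ k ∈ Ico (m + 1) (n.choose a + 1), (p0K n a).coeff k * A n a ((m : ℤ) - k) = 0 := by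
      refine Finset.sum_eq_zero fun j hj => ?_
      rw [Finset.mem_Ico] at hj
      rw [A_neg n a ha haa _ (by omega) (by omega), mul_zero]
    rw [h0, add_zero] at hmaster
    exact hmaster

lemma sum_lead (ha : 1 ≤ a) (han : a ≤ n) :
    ∑ j ∈ range ((n.choose a - n) + 1),
      (p0K n a).coeff j * A n a (((n.choose a - n : ℕ) : ℤ) - j) ≠ 0 := by
  have hn : 0 < n := lt_of_lt_of_le ha han
  rcases lt_or_eq_of_le han with hlt | heq
  · -- a < n
    have hNn : n ≤ n.choose a := choose_ge a n ha hlt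
    set N := n.choose a with hN
    set D := N - n with hD
    have hmaster := master n a han (D : ℤ)
    rw [← Finset.sum_range_add_sum_Ico _ (show D + 1 ≤ N + 1 by omega)] at hmaster
    rw [Finset.sum_Ico_succ_top (show D + 1 ≤ N by omega)] at hmaster
    have h0 : ∑ k ∈ Ico (D + 1) N, (p0K n a).coeff k * A n a ((D : ℤ) - k) = 0 := by
      refine Finset.sum_eq_zero fun j hj => ?_
      rw [Finset.mem_Ico] at hj
      rw [A_neg n a ha hlt _ (by omega) (by omega), mul_zero]
    rw [h0, zero_add] at hmaster
    intro hcontra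
    rw [hcontra, zero_add] at hmaster
    have hDN : ((D : ℕ) : ℤ) - ((N : ℕ) : ℤ) = -(n : ℤ) := by omega
    rw [hDN] at hmaster
    exact mul_ne_zero (p0K_coeff_top_ne_zero n a) (A_neg_n n a ha han) hmaster
  · -- a = n
    subst heq
    rw [Nat.choose_self]
    have h10 : 1 - a = 0 := by omega
    rw [h10]
    rw [Finset.sum_range_one]
    simp only [Nat.cast_zero, Nat.cast_ofNat, zero_sub, neg_zero, sub_zero]
    apply mul_ne_zero
    · have : (p0K a a).coeff 0 = 1 := by
        rw [Polynomial.coeff_zero_eq_eval_zero, p0K, Polynomial.eval_prod]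
        simp
      rw [this]
      exact one_ne_zero
    · rw [A_zero]
      exact det_Vrev_ne_zero a

lemma phi_alt_delta : φ n (alternant n (fun j => n - 1 - (j : ℕ))) = (Vrev n).det := by
  rw [phi_alternant]
  unfold Vrev
  congr 1
  ext i j
  simp only [Matrix.of_apply]
  congr 1
  have := j.isLt
  omega

end RectGF

theorem rect_schur_gf_poly (n a : ℕ) (ha : 1 ≤ a) (han : a ≤ n)
    (s : ℕ → MvPolynomial (Fin n) ℚ)
    (hs : ∀ k : ℕ, s k * alternant n (fun j => n - 1 - (j : ℕ)) =
      alternant n (fun j => (if (j : ℕ) < a then k else 0) + (n - 1 - (j : ℕ)))) :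
    ∃ p : Polynomial (MvPolynomial (Fin n) ℚ),
      (p : PowerSeries (MvPolynomial (Fin n) ℚ)) =
        (∏ I ∈ (Finset.univ : Finset (Fin n)).powersetCard a,
          (1 - PowerSeries.C (∏ i ∈ I, MvPolynomial.X i) *
            PowerSeries.X)) * PowerSeries.mk s ∧
      p.natDegree = n.choose a - n := by
  classical
  set D := n.choose a - n with hD
  set F : PowerSeries (MvPolynomial (Fin n) ℚ) :=
    ((RectGF.p0 n a : Polynomial (MvPolynomial (Fin n) ℚ)) :
      PowerSeries (MvPolynomial (Fin n) ℚ)) * PowerSeries.mk s with hF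
  have hadne : alternant n (fun j => n - 1 - (j : ℕ)) ≠ 0 := by
    intro h
    have h2 := RectGF.phi_alt_delta n
    rw [h, map_zero] at h2
    exact RectGF.det_Vrev_ne_zero n h2.symm
  have hvan : ∀ m : ℕ, D < m → (PowerSeries.coeff m) F = 0 := by
    intro m hm
    have h1 := RectGF.key_sum n a s hs m
    rw [RectGF.sum_vanish n a ha han m hm] at h1
    rw [← map_mul] at h1
    have h2 : alternant n (fun j => n - 1 - (j : ℕ)) * (PowerSeries.coeff m) F = 0 :=
      RectGF.phi_injective n (by rw [h1, map_zero])
    exact (mul_eq_zero.mp h2).resolve_left hadne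
  have hlead : (PowerSeries.coeff D) F ≠ 0 := by
    intro h
    have h1 := RectGF.key_sum n a s hs D
    rw [h, map_zero, mul_zero] at h1
    exact RectGF.sum_lead n a ha han h1.symm
  have hcoeff : ∀ k : ℕ, (∑ m ∈ Finset.range (D + 1),
      Polynomial.C ((PowerSeries.coeff m) F) * Polynomial.X ^ m).coeff k =
      if k ≤ D then (PowerSeries.coeff k) F else 0 := by
    intro k
    rw [Polynomial.finset_sum_coeff]
    simp only [Polynomial.coeff_C_mul, Polynomial.coeff_X_pow, mul_ite, mul_one, mul_zero]
    rw [Finset.sum_ite_eq (Finset.range (D + 1)) k]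
    simp [Nat.lt_succ_iff]
  refine ⟨∑ m ∈ Finset.range (D + 1), Polynomial.C ((PowerSeries.coeff m) F) * Polynomial.X ^ m,
    ?_, ?_⟩
  · rw [← RectGF.p0_coe, ← hF]
    refine PowerSeries.ext fun k => ?_
    rw [Polynomial.coeff_coe, hcoeff k]
    split_ifs with hk
    · rfl
    · exact (hvan k (by omega)).symm
  · apply le_antisymm
    · rw [Polynomial.natDegree_le_iff_coeff_eq_zero]
      intro N hN
      rw [hcoeff N, if_neg (by omega)]
    · exact Polynomial.le_natDegree_of_ne_zero (by rw [hcoeff D, if_pos le_rfl]; exact hlead)
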